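/- Let 𝒮 and 𝒯 be two nonempty families of subsets of ω, each closed under finite additions of elements. Suppose 𝒮 ⊆ 𝒯 and that for every T ∈ 𝒯 there is S ∈ 𝒮 with S ⊆ T. Then for the associated flower graphs, G_𝒮 ≥₃ G_𝒯. -/

import Mathlib

open FirstOrder Language

namespace BFPaper

noncomputable section

/-! ## Countability of formulas in a countable relational language -/

instance formulaCountable (L : FirstOrder.Language.{0,0}) [L.IsRelational]
    [∀ n, Countable (L.Relations n)] (α : Type) [Countable α] :
    Countable (L.Formula α) := by
  have h1 : Countable (Σ n, L.BoundedFormula α n) :=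
    Function.Injective.countable BoundedFormula.listEncode_sigma_injective
  exact Function.Injective.countable
    (f := fun φ : L.Formula α => (⟨0, φ⟩ : Σ n, L.BoundedFormula α n))
    (fun a b h => by simpa using h)

/-- A fixed enumeration of the quantifier-free first-order formulas in the
variables `x_0, …, x_{n-1}`. -/
noncomputable def qfEnum (L : FirstOrder.Language.{0,0}) [L.IsRelational]
    [∀ n, Countable (L.Relations n)] (n : ℕ) : ℕ → L.Formula (Fin n) := fun k =>
  haveI : Nonempty {φ : L.Formula (Fin n) // φ.IsQF} :=
    ⟨⟨⊥, BoundedFormula.isQF_bot⟩⟩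
  (Classical.choose (exists_surjective_nat {φ : L.Formula (Fin n) // φ.IsQF}) k).1

/-! ## The standard asymmetric back-and-forth relations -/

/-- `bfLeq L α M N a b` is the standard asymmetric back-and-forth relation
`(M, ā) ≤_α (N, b̄)`. -/
noncomputable def bfLeq (L : FirstOrder.Language.{0,0}) [L.IsRelational]
    [∀ n, Countable (L.Relations n)] (α : Ordinal.{0}) (M N : Type)
    [L.Structure M] [L.Structure N] {n : ℕ} (a : Fin n → M) (b : Fin n → N) : Prop :=
  if α = 0 then
    ∀ k < n, ((qfEnum L n k).Realize a ↔ (qfEnum L n k).Realize b)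
  else
    ∀ β, ∀ _ : β < α, ∀ (m : ℕ) (d : Fin m → N), ∃ c : Fin m → M,
      bfLeq L β N M (Fin.append b d) (Fin.append a c)
termination_by α
decreasing_by assumption

/-- `M ≤_α N` for whole structures (empty tuples). -/
noncomputable def structLeq (L : FirstOrder.Language.{0,0}) [L.IsRelational]
    [∀ n, Countable (L.Relations n)] (α : Ordinal.{0}) (M N : Type)
    [L.Structure M] [L.Structure N] : Prop :=
  bfLeq L α M N Fin.elim0 Fin.elim0

/-! ## The space of countable `L`-structures -/

/-- The Polish space `Mod(L)` of `L`-structures with universe `ℕ` (for a relational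
language), presented as a product of discrete spaces. -/
abbrev ModSpace (L : FirstOrder.Language.{0,0}) : Type :=
  ∀ (n : ℕ), L.Relations n → (Fin n → ℕ) → Bool

/-- The underlying set (`ℕ`) of the structure coded by a point of `Mod(L)`. -/
def ModCarrier {L : FirstOrder.Language.{0,0}} (_x : ModSpace L) : Type := ℕ

instance {L : FirstOrder.Language.{0,0}} (x : ModSpace L) : Countable (ModCarrier x) :=
  inferInstanceAs (Countable ℕ)

noncomputable instance modCarrierStructure {L : FirstOrder.Language.{0,0}} [L.IsRelational]
    (x : ModSpace L) : L.Structure (ModCarrier x) where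
  funMap := fun {_} f => isEmptyElim f
  RelMap := fun {n} R v => x n R v = true

/-! ## The boldface Borel hierarchy and Wadge reducibility -/

/-- `A` is (boldface) `Σ⁰_α`: `Σ⁰₁` sets are the open sets, and for `α > 1` a `Σ⁰_α` set
is a countable union of sets each of which is `Π⁰_β` for some `1 ≤ β < α`. -/
def SigmaB (α : Ordinal.{0}) {X : Type} [TopologicalSpace X] (A : Set X) : Prop :=
  if α ≤ 1 then IsOpen A
  else ∃ f : ℕ → Set X, A = (⋃ i, f i) ∧
    ∀ i, ∃ β, 1 ≤ β ∧ ∃ _ : β < α, SigmaB β (f i)ᶜ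
termination_by α
decreasing_by assumption

/-- `A` is (boldface) `Π⁰_α`, i.e. the complement of `A` is `Σ⁰_α`. -/
def PiB (α : Ordinal.{0}) {X : Type} [TopologicalSpace X] (A : Set X) : Prop :=
  SigmaB α Aᶜ

/-- `A` is `Π⁰_α`-hard: every `Π⁰_α` subset of a zero-dimensional Polish space
continuously (Wadge) reduces to `A`. -/
def PiHard (α : Ordinal.{0}) {X : Type} [TopologicalSpace X] (A : Set X) : Prop :=
  ∀ (Y : Type) [TopologicalSpace Y] [PolishSpace Y] [TotallyDisconnectedSpace Y]
    (B : Set Y), PiB α B → ∃ g : Y → X, Continuous g ∧ ∀ y, y ∈ B ↔ g y ∈ A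

/-- `A` is `Π⁰_α`-complete. -/
def PiComplete (α : Ordinal.{0}) {X : Type} [TopologicalSpace X] (A : Set X) : Prop :=
  PiB α A ∧ PiHard α A

/-! ## Infinitary formulas of `L_{ω₁ω}` -/

/-- Formulas of `L_{ω₁ω}` (with countable conjunctions and disjunctions), with free
variables indexed by `ℕ`. -/
inductive LForm (L : FirstOrder.Language.{0,0}) : Type
  | rel (n : ℕ) (R : L.Relations n) (ts : Fin n → ℕ) : LForm L
  | equ (i j : ℕ) : LForm L
  | tru : LForm L
  | fls : LForm L
  | not (φ : LForm L) : LForm L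
  | conj (f : ℕ → LForm L) : LForm L
  | disj (f : ℕ → LForm L) : LForm L
  | all (k : ℕ) (φ : LForm L) : LForm L
  | ex (k : ℕ) (φ : LForm L) : LForm L

/-- Satisfaction of an `L_{ω₁ω}` formula in a structure `M` under a variable
assignment `v : ℕ → M`. -/
def Sat {L : FirstOrder.Language.{0,0}} (M : Type) [L.Structure M] : LForm L → (ℕ → M) → Prop
  | .rel _ R ts, v => Structure.RelMap R (fun i => v (ts i))
  | .equ i j, v => v i = v j
  | .tru, _ => True
  | .fls, _ => False
  | .not φ, v => ¬ Sat M φ v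
  | .conj f, v => ∀ i, Sat M (f i) v
  | .disj f, v => ∃ i, Sat M (f i) v
  | .all k φ, v => ∀ m : M, Sat M φ (Function.update v k m)
  | .ex k φ, v => ∃ m : M, Sat M φ (Function.update v k m)

/-- The free variables of an `L_{ω₁ω}` formula. -/
def fv {L : FirstOrder.Language.{0,0}} : LForm L → Set ℕ
  | .rel _ _ ts => Set.range ts
  | .equ i j => {i, j}
  | .tru => ∅
  | .fls => ∅
  | .not φ => fv φ
  | .conj f => ⋃ i, fv (f i)
  | .disj f => ⋃ i, fv (f i)
  | .all k φ => fv φ \ {k}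
  | .ex k φ => fv φ \ {k}

/-- Finitary quantifier-free `L_{ω₁ω}` formulas. -/
inductive IsQFinf {L : FirstOrder.Language.{0,0}} : LForm L → Prop
  | rel (n R ts) : IsQFinf (.rel n R ts)
  | equ (i j) : IsQFinf (.equ i j)
  | tru : IsQFinf .tru
  | fls : IsQFinf .fls
  | not {φ} : IsQFinf φ → IsQFinf (.not φ)
  | conj {f} : (Set.range f).Finite → (∀ i, IsQFinf (f i)) → IsQFinf (.conj f)
  | disj {f} : (Set.range f).Finite → (∀ i, IsQFinf (f i)) → IsQFinf (.disj f)

/-- `ExBlockOf φ ψ` : `φ` is `∃ x̄ ψ` for a (possibly empty) finite block of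
existential quantifiers. -/
inductive ExBlockOf {L : FirstOrder.Language.{0,0}} : LForm L → LForm L → Prop
  | refl (φ) : ExBlockOf φ φ
  | ex {φ ψ} (k) : ExBlockOf φ ψ → ExBlockOf (.ex k φ) ψ

/-- `AllBlockOf φ ψ` : `φ` is `∀ x̄ ψ` for a (possibly empty) finite block of
universal quantifiers. -/
inductive AllBlockOf {L : FirstOrder.Language.{0,0}} : LForm L → LForm L → Prop
  | refl (φ) : AllBlockOf φ φ
  | all {φ ψ} (k) : AllBlockOf φ ψ → AllBlockOf (.all k φ) ψ

/-- `IsSP α true φ` says `φ` is `Σ_α`; `IsSP α false φ` says `φ` is `Π_α`.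
`Σ₀ = Π₀` are the finitary quantifier-free formulas; for `α ≥ 1`, a `Σ_α` formula is a
countable disjunction of formulas `∃x̄ᵢ ψᵢ` with each `ψᵢ` in `Π_{βᵢ}` for some `βᵢ < α`,
and dually for `Π_α`. -/
def IsSP {L : FirstOrder.Language.{0,0}} (α : Ordinal.{0}) (isSigma : Bool) (φ : LForm L) : Prop :=
  if α = 0 then IsQFinf φ
  else if isSigma then
    ∃ f : ℕ → LForm L, φ = .disj f ∧
      ∀ i, ∃ ψ β, ∃ _ : β < α, ExBlockOf (f i) ψ ∧ IsSP β false ψ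
  else
    ∃ f : ℕ → LForm L, φ = .conj f ∧
      ∀ i, ∃ ψ β, ∃ _ : β < α, AllBlockOf (f i) ψ ∧ IsSP β true ψ
termination_by α
decreasing_by all_goals assumption

/-- `φ` is a `Σ_α` formula of `L_{ω₁ω}`. -/
def IsSigmaF {L : FirstOrder.Language.{0,0}} (α : Ordinal.{0}) (φ : LForm L) : Prop := IsSP α true φ

/-- `φ` is a `Π_α` formula of `L_{ω₁ω}`. -/
def IsPiF {L : FirstOrder.Language.{0,0}} (α : Ordinal.{0}) (φ : LForm L) : Prop := IsSP α false φ

/-! ## The back-and-forth classes `𝔈_α`, `𝔄_α`, `𝔈̄_α`, `𝔄̄_α` -/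

/-- Closure of a class of formulas under existential quantification and countable
disjunction. -/
inductive CloExDisj {L : FirstOrder.Language.{0,0}} (base : LForm L → Prop) : LForm L → Prop
  | base {φ} : base φ → CloExDisj base φ
  | ex {φ} (k) : CloExDisj base φ → CloExDisj base (.ex k φ)
  | disj {f} : (∀ i, CloExDisj base (f i)) → CloExDisj base (.disj f)

/-- Closure of a class of formulas under universal quantification and countable
conjunction. -/
inductive CloAllConj {L : FirstOrder.Language.{0,0}} (base : LForm L → Prop) : LForm L → Prop
  | base {φ} : base φ → CloAllConj base φ
  | all {φ} (k) : CloAllConj base φ → CloAllConj base (.all k φ)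
  | conj {f} : (∀ i, CloAllConj base (f i)) → CloAllConj base (.conj f)

/-- Closure of a class of formulas under countable conjunctions and disjunctions. -/
inductive CloConjDisj {L : FirstOrder.Language.{0,0}} (base : LForm L → Prop) : LForm L → Prop
  | base {φ} : base φ → CloConjDisj base φ
  | conj {f} : (∀ i, CloConjDisj base (f i)) → CloConjDisj base (.conj f)
  | disj {f} : (∀ i, CloConjDisj base (f i)) → CloConjDisj base (.disj f)

/-- `IsEA α true φ` says `φ ∈ 𝔈_α` and `IsEA α false φ` says `φ ∈ 𝔄_α`:
`𝔈₁ = Σ₁`, `𝔄₁ = Π₁`; for `α > 1`, `𝔈_α` is the closure of `⋃_{1 ≤ β < α} 𝔄̄_β` under `∃`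
and countable disjunction, where `𝔄̄_β` is the closure of `𝔄_β` under countable
conjunctions and disjunctions; dually for `𝔄_α`. -/
def IsEA {L : FirstOrder.Language.{0,0}} (α : Ordinal.{0}) (isE : Bool) (φ : LForm L) : Prop :=
  if α ≤ 1 then (if isE then IsSP 1 true φ else IsSP 1 false φ)
  else if isE then
    CloExDisj (fun ψ => ∃ β, 1 ≤ β ∧ ∃ _ : β < α,
      CloConjDisj (fun χ => IsEA β false χ) ψ) φ
  else
    CloAllConj (fun ψ => ∃ β, 1 ≤ β ∧ ∃ _ : β < α,
      CloConjDisj (fun χ => IsEA β true χ) ψ) φ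
termination_by α
decreasing_by all_goals assumption

/-- `φ ∈ 𝔈_α`. -/
def IsE {L : FirstOrder.Language.{0,0}} (α : Ordinal.{0}) (φ : LForm L) : Prop := IsEA α true φ

/-- `φ ∈ 𝔄_α`. -/
def IsA {L : FirstOrder.Language.{0,0}} (α : Ordinal.{0}) (φ : LForm L) : Prop := IsEA α false φ

/-- `φ ∈ 𝔈̄_α`, the closure of `𝔈_α` under countable conjunctions and disjunctions. -/
def IsEbar {L : FirstOrder.Language.{0,0}} (α : Ordinal.{0}) (φ : LForm L) : Prop :=
  CloConjDisj (IsE α) φ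

/-- `φ ∈ 𝔄̄_α`, the closure of `𝔄_α` under countable conjunctions and disjunctions. -/
def IsAbar {L : FirstOrder.Language.{0,0}} (α : Ordinal.{0}) (φ : LForm L) : Prop :=
  CloConjDisj (IsA α) φ

/-- `φ` is a `∀𝔈_α` formula: a countable conjunction of universally quantified `𝔈_α`
formulas. -/
def IsForallE {L : FirstOrder.Language.{0,0}} (α : Ordinal.{0}) (φ : LForm L) : Prop :=
  ∃ f : ℕ → LForm L, φ = .conj f ∧ ∀ i, ∃ ψ, AllBlockOf (f i) ψ ∧ IsE α ψ

/-- A sentence is a formula with no free variables. -/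
def IsSentence {L : FirstOrder.Language.{0,0}} (φ : LForm L) : Prop := fv φ = ∅

/-- Satisfaction of a formula (with free variables among `x_0, …, x_{n-1}`) by a tuple. -/
def SatTup {L : FirstOrder.Language.{0,0}} (M : Type) [L.Structure M] {n : ℕ}
    (c : Fin n → M) (φ : LForm L) : Prop :=
  ∀ v : ℕ → M, (∀ k : Fin n, v k = c k) → Sat M φ v

end


/-- The language with a single binary relation symbol. -/
def binLang : FirstOrder.Language.{0,0} :=
  ⟨fun _ => Empty, fun n => match n with | 2 => Unit | _ => Empty⟩

instance : binLang.IsRelational := fun _ => inferInstanceAs (IsEmpty Empty)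

instance (n : ℕ) : Countable (binLang.Relations n) := by
  match n with
  | 0 => exact inferInstanceAs (Countable Empty)
  | 1 => exact inferInstanceAs (Countable Empty)
  | 2 => exact inferInstanceAs (Countable Unit)
  | (k+3) => exact inferInstanceAs (Countable Empty)


/-- The vertices of the flower graph `G_𝒮`: for each `S ∈ 𝒮` and each `c : ℕ` (copy index),
a central vertex (`none`) together with, for each `n ∈ S`, the non-central vertices
`w_1, …, w_{n-1}` of an attached loop (cycle) of length `n` through the central vertex. -/
def FlowerV (S : Set (Set ℕ)) : Type :=
  Σ c : ↥S × ℕ, Option {p : ℕ × ℕ // p.1 ∈ (c.1 : Set ℕ) ∧ 0 < p.2 ∧ p.2 < p.1}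

/-- The edge relation of the flower graph `G_𝒮`. -/
def flowerAdj {S : Set (Set ℕ)} (v w : FlowerV S) : Prop :=
  v.1 = w.1 ∧
    match Option.map Subtype.val v.2, Option.map Subtype.val w.2 with
    | none, none => (1 : ℕ) ∈ (v.1.1 : Set ℕ)
    | none, some p => p.2 = 1 ∨ p.2 + 1 = p.1
    | some p, none => p.2 = 1 ∨ p.2 + 1 = p.1
    | some p, some q => p.1 = q.1 ∧ (p.2 + 1 = q.2 ∨ q.2 + 1 = p.2)

instance flowerStructure (S : Set (Set ℕ)) : binLang.Structure (FlowerV S) where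
  funMap := fun {_} f => isEmptyElim f
  RelMap := fun {n} => match n with
    | 0 => fun r _ => Empty.elim r
    | 1 => fun r _ => Empty.elim r
    | 2 => fun _ v => flowerAdj (v 0) (v 1)
    | (_+3) => fun r _ => Empty.elim r



/-! ### Auxiliary development -/

structure NiceMap (S T : Set (Set ℕ)) where
  κ : ↥S × ℕ → ↥T × ℕ
  inj : Function.Injective κ
  sub : ∀ x : ↥S × ℕ, (x.1 : Set ℕ) ⊆ ((κ x).1 : Set ℕ)
  one : ∀ x : ↥S × ℕ, (1:ℕ) ∈ (((κ x).1 : ↥T) : Set ℕ) → (1:ℕ) ∈ (x.1 : Set ℕ)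

def NiceMap.toFun {S T : Set (Set ℕ)} (g : NiceMap S T) : FlowerV S → FlowerV T :=
  fun v => ⟨g.κ v.1, v.2.map (fun p => ⟨p.1, ⟨g.sub v.1 p.2.1, p.2.2.1, p.2.2.2⟩⟩)⟩

lemma NiceMap.toFun_fst {S T : Set (Set ℕ)} (g : NiceMap S T) (v : FlowerV S) :
    (g.toFun v).1 = g.κ v.1 := rfl

lemma NiceMap.toFun_snd_val {S T : Set (Set ℕ)} (g : NiceMap S T) (v : FlowerV S) :
    Option.map Subtype.val (g.toFun v).2 = Option.map Subtype.val v.2 := by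
  rcases v with ⟨c, o⟩
  cases o <;> rfl

lemma flower_eq {S : Set (Set ℕ)} {c c' : ↥S × ℕ}
    {o : Option {p : ℕ × ℕ // p.1 ∈ (c.1 : Set ℕ) ∧ 0 < p.2 ∧ p.2 < p.1}}
    {o' : Option {p : ℕ × ℕ // p.1 ∈ (c'.1 : Set ℕ) ∧ 0 < p.2 ∧ p.2 < p.1}}
    (h : c = c') (h2 : Option.map Subtype.val o = Option.map Subtype.val o') :
    (⟨c, o⟩ : FlowerV S) = ⟨c', o'⟩ := by
  subst h
  have : o = o' := Option.map_injective Subtype.val_injective h2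
  rw [this]

lemma NiceMap.toFun_inj {S T : Set (Set ℕ)} (g : NiceMap S T) :
    Function.Injective g.toFun := by
  rintro ⟨c, o⟩ ⟨c', o'⟩ h
  have h1 : g.κ c = g.κ c' := congrArg Sigma.fst h
  have h2 := congrArg (fun v => Option.map Subtype.val v.2) h
  replace h2 : Option.map Subtype.val o = Option.map Subtype.val o' :=
    (toFun_snd_val g ⟨c, o⟩).symm.trans (h2.trans (toFun_snd_val g ⟨c', o'⟩))
  exact flower_eq (g.inj h1) h2

lemma NiceMap.adj_iff {S T : Set (Set ℕ)} (g : NiceMap S T) (v w : FlowerV S) :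
    flowerAdj (g.toFun v) (g.toFun w) ↔ flowerAdj v w := by
  unfold flowerAdj
  rw [NiceMap.toFun_snd_val, NiceMap.toFun_snd_val, NiceMap.toFun_fst, NiceMap.toFun_fst]
  apply and_congr ⟨fun h => g.inj h, fun h => congrArg _ h⟩
  cases hv : Option.map Subtype.val v.2 <;> cases hw : Option.map Subtype.val w.2 <;>
    simp only []
  · exact ⟨fun h => g.one v.1 h, fun h => g.sub v.1 h⟩

/-- The `binLang`-embedding induced by a nice map. -/
noncomputable def NiceMap.emb {S T : Set (Set ℕ)} (g : NiceMap S T) :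
    FlowerV S ↪[binLang] FlowerV T where
  toFun := g.toFun
  inj' := g.toFun_inj
  map_fun' := fun {n} f => isEmptyElim f
  map_rel' := fun {n} r x => by
    match n, r with
    | 2, r => exact g.adj_iff (x 0) (x 1)

lemma qfEnum_isQF (n k : ℕ) : (qfEnum binLang n k).IsQF := by
  unfold qfEnum
  exact Subtype.prop _

lemma bfLeq_zero_of_emb {S T : Set (Set ℕ)} (g : NiceMap S T) {n : ℕ}
    (a : Fin n → FlowerV S) (b : Fin n → FlowerV T) (hb : b = g.toFun ∘ a) :
    (∀ k < n, ((qfEnum binLang n k).Realize a ↔ (qfEnum binLang n k).Realize b)) := by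
  subst hb
  intro k _
  have := (qfEnum_isQF n k).realize_embedding (M := FlowerV S) (N := FlowerV T) g.emb
    (v := a) (xs := (default : Fin 0 → FlowerV S))
  unfold Formula.Realize
  have e : (⇑g.emb ∘ (default : Fin 0 → FlowerV S)) = (default : Fin 0 → FlowerV T) :=
    Subsingleton.elim _ _
  rw [e] at this
  exact this.symm


lemma bfLeq_zero_iff {M N : Type} [binLang.Structure M] [binLang.Structure N] {n : ℕ}
    (a : Fin n → M) (b : Fin n → N) :
    bfLeq binLang 0 M N a b ↔
      ∀ k < n, ((qfEnum binLang n k).Realize a ↔ (qfEnum binLang n k).Realize b) := by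
  rw [bfLeq]
  simp

lemma bfLeq_pos_iff {α : Ordinal.{0}} (hα : α ≠ 0) {M N : Type}
    [binLang.Structure M] [binLang.Structure N] {n : ℕ} (a : Fin n → M) (b : Fin n → N) :
    bfLeq binLang α M N a b ↔
      ∀ β < α, ∀ (m : ℕ) (d : Fin m → N), ∃ c : Fin m → M,
        bfLeq binLang β N M (Fin.append b d) (Fin.append a c) := by
  rw [bfLeq]
  simp [hα]

lemma lt_three {β : Ordinal.{0}} (h : β < 3) : β = 0 ∨ β = 1 ∨ β = 2 := by
  have h3 : (3 : Ordinal.{0}) = 2 + 1 := by norm_num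
  have h2 : (2 : Ordinal.{0}) = 1 + 1 := by norm_num
  rw [h3, Ordinal.add_one_eq_succ, Order.lt_succ_iff] at h
  rcases lt_or_eq_of_le h with h | h
  · rw [h2, Ordinal.add_one_eq_succ, Order.lt_succ_iff] at h
    rcases lt_or_eq_of_le h with h | h
    · left; exact Ordinal.lt_one_iff_zero.1 h
    · right; left; exact h
  · right; right; exact h

lemma lt_two {β : Ordinal.{0}} (h : β < 2) : β = 0 ∨ β = 1 := by
  have h2 : (2 : Ordinal.{0}) = 1 + 1 := by norm_num
  rw [h2, Ordinal.add_one_eq_succ, Order.lt_succ_iff] at h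
  rcases lt_or_eq_of_le h with h | h
  · left; exact Ordinal.lt_one_iff_zero.1 h
  · right; exact h

lemma lt_one {β : Ordinal.{0}} (h : β < 1) : β = 0 := Ordinal.lt_one_iff_zero.1 h


lemma comp_append {α β : Type*} {n m : ℕ} (f : α → β) (a : Fin n → α) (b : Fin m → α) :
    f ∘ Fin.append a b = Fin.append (f ∘ a) (f ∘ b) := by
  funext i
  refine Fin.addCases (fun j => ?_) (fun j => ?_) i <;>
    simp [Fin.append_left, Fin.append_right]

lemma flower_eq' {S : Set (Set ℕ)} {v w : FlowerV S} (h : v.1 = w.1)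
    (h2 : Option.map Subtype.val v.2 = Option.map Subtype.val w.2) : v = w := by
  rcases v with ⟨c, o⟩; rcases w with ⟨c', o'⟩
  exact flower_eq h h2

/-- The inclusion nice map induced by `S ⊆ T`. -/
def inclNice {S T : Set (Set ℕ)} (hST : S ⊆ T) : NiceMap S T where
  κ := fun x => (⟨x.1.1, hST x.1.2⟩, x.2)
  inj := by
    rintro ⟨⟨X, hX⟩, c⟩ ⟨⟨Y, hY⟩, c'⟩ h
    have h1 : X = Y := congrArg (fun z : ↥T × ℕ => (z.1 : Set ℕ)) h
    have h2 : c = c' := congrArg Prod.snd h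
    subst h1; subst h2; rfl
  sub := fun _ => subset_rfl
  one := fun _ h => h

section extension

attribute [local instance] Classical.propDecidable

variable {S T : Set (Set ℕ)} (hST : S ⊆ T)
  (hSclosed : ∀ A ∈ S, ∀ F : Set ℕ, F.Finite → A ∪ F ∈ S)
  (hdom : ∀ A ∈ T, ∃ B ∈ S, B ⊆ A)
  {m k : ℕ} (d : Fin m → FlowerV S) (e : Fin k → FlowerV T)

/-- A copy index larger than all copy indices appearing in `d` and `e`. -/
noncomputable def NN : ℕ :=
  (Finset.univ.sup fun i : Fin m => (d i).1.2) + (Finset.univ.sup fun i : Fin k => (e i).1.2) + 1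

lemma NN_d (i : Fin m) : (d i).1.2 < NN d e := by
  have h1 : (d i).1.2 ≤ Finset.univ.sup fun i : Fin m => (d i).1.2 :=
    Finset.le_sup (f := fun i : Fin m => (d i).1.2) (Finset.mem_univ i)
  unfold NN; omega

lemma NN_e (i : Fin k) : (e i).1.2 < NN d e := by
  have h1 : (e i).1.2 ≤ Finset.univ.sup fun i : Fin k => (e i).1.2 :=
    Finset.le_sup (f := fun i : Fin k => (e i).1.2) (Finset.mem_univ i)
  unfold NN; omega

/-- The loop lengths used by `e` in the component `p`. -/
def FF (p : ↥T × ℕ) : Set ℕ :=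
  {n | ∃ i : Fin k, (e i).1 = p ∧ ∃ q, (e i).2 = some q ∧ (q : ℕ × ℕ).1 = n}

lemma FF_finite (p : ↥T × ℕ) : (FF e p).Finite := by
  apply Set.Finite.subset (Set.finite_range fun i : Fin k =>
    ((e i).2).elim 0 (fun q => (q : ℕ × ℕ).1))
  rintro n ⟨i, hip, q, hq, rfl⟩
  refine ⟨i, ?_⟩
  show (e i).2.elim 0 (fun q => (q : ℕ × ℕ).1) = (q : ℕ × ℕ).1
  rw [hq]
  rfl

lemma FF_sub (p : ↥T × ℕ) : FF e p ⊆ (p.1 : Set ℕ) := by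
  rintro n ⟨i, hip, ⟨⟨n1, j1⟩, hmem1, hrest⟩, hq, rfl⟩
  exact hip ▸ hmem1

/-- The set attached to the patch component for target component `p`. -/
noncomputable def BB (p : ↥T × ℕ) : Set ℕ :=
  (hdom p.1.1 p.1.2).choose ∪ (FF e p ∪ ((p.1 : Set ℕ) ∩ {1}))

include hSclosed in
lemma BB_mem (p : ↥T × ℕ) : BB hdom e p ∈ S := by
  obtain ⟨hB, _⟩ := (hdom p.1.1 p.1.2).choose_spec
  exact hSclosed _ hB _
    ((FF_finite e p).union (Set.Finite.inter_of_right (Set.finite_singleton 1) _))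

lemma BB_sub (p : ↥T × ℕ) : BB hdom e p ⊆ (p.1 : Set ℕ) := by
  obtain ⟨_, hBsub⟩ := (hdom p.1.1 p.1.2).choose_spec
  exact Set.union_subset hBsub (Set.union_subset (FF_sub e p) Set.inter_subset_left)

lemma BB_one (p : ↥T × ℕ) (h : (1:ℕ) ∈ (p.1 : Set ℕ)) : (1:ℕ) ∈ BB hdom e p :=
  Or.inr (Or.inr ⟨h, rfl⟩)

/-- An index realizing the component `p`, if any. -/
noncomputable def idxP (p : ↥T × ℕ) : ℕ :=
  if h : ∃ i : Fin k, (e i).1 = p then (h.choose : Fin k).val else 0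

lemma idxP_spec (p : ↥T × ℕ) (h : ∃ i : Fin k, (e i).1 = p) :
    ∃ i : Fin k, i.val = idxP e p ∧ (e i).1 = p := by
  rw [idxP, dif_pos h]
  exact ⟨h.choose, rfl, h.choose_spec⟩

/-- The patch component in `G_S` assigned to target component `p`. -/
noncomputable def sP (p : ↥T × ℕ) : ↥S × ℕ :=
  (⟨BB hdom e p, BB_mem hSclosed hdom e p⟩, NN d e + idxP e p)

lemma sP_inj {p q : ↥T × ℕ} (hp : ∃ i : Fin k, (e i).1 = p) (hq : ∃ i : Fin k, (e i).1 = q)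
    (h : sP hSclosed hdom d e p = sP hSclosed hdom d e q) : p = q := by
  have h2 : idxP e p = idxP e q := by
    have := congrArg Prod.snd h
    simp only [sP] at this
    omega
  obtain ⟨i, hi, hip⟩ := idxP_spec e p hp
  obtain ⟨j, hj, hjq⟩ := idxP_spec e q hq
  have : i = j := Fin.ext (by omega)
  rw [← hip, ← hjq, this]

lemma sP_big (p : ↥T × ℕ) : NN d e ≤ (sP hSclosed hdom d e p).2 := Nat.le_add_right _ _

/-- The component map of the extension embedding. -/
noncomputable def κE : ↥S × ℕ → ↥T × ℕ := fun x =>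
  if h : ∃ p : ↥T × ℕ, ((p.1 : Set ℕ) ∉ S ∧ ∃ i : Fin k, (e i).1 = p) ∧
      x = sP hSclosed hdom d e p
  then h.choose else (⟨x.1.1, hST x.1.2⟩, x.2)

lemma κE_s (p : ↥T × ℕ) (hp1 : (p.1 : Set ℕ) ∉ S) (hp2 : ∃ i : Fin k, (e i).1 = p) :
    κE hST hSclosed hdom d e (sP hSclosed hdom d e p) = p := by
  rw [κE, dif_pos (show ∃ q : ↥T × ℕ, (((q.1 : Set ℕ) ∉ S ∧ ∃ i : Fin k, (e i).1 = q) ∧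
      sP hSclosed hdom d e p = sP hSclosed hdom d e q) from ⟨p, ⟨hp1, hp2⟩, rfl⟩)]
  set h : ∃ q : ↥T × ℕ, (((q.1 : Set ℕ) ∉ S ∧ ∃ i : Fin k, (e i).1 = q) ∧
      sP hSclosed hdom d e p = sP hSclosed hdom d e q) := ⟨p, ⟨hp1, hp2⟩, rfl⟩
  obtain ⟨⟨_, hc2⟩, hc3⟩ := h.choose_spec
  exact (sP_inj hSclosed hdom d e hp2 hc2 hc3).symm

lemma κE_low (x : ↥S × ℕ) (hx : x.2 < NN d e) :
    κE hST hSclosed hdom d e x = (⟨x.1.1, hST x.1.2⟩, x.2) := by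
  rw [κE, dif_neg]
  rintro ⟨p, _, rfl⟩
  have := sP_big hSclosed hdom d e p
  simp only [sP] at this hx
  omega

lemma κE_spec (x : ↥S × ℕ) :
    (∃ p : ↥T × ℕ, ((p.1 : Set ℕ) ∉ S ∧ ∃ i : Fin k, (e i).1 = p) ∧
        x = sP hSclosed hdom d e p ∧ κE hST hSclosed hdom d e x = p) ∨
      κE hST hSclosed hdom d e x = (⟨x.1.1, hST x.1.2⟩, x.2) := by
  rw [κE]
  split
  · next h =>
    obtain ⟨hp, hx⟩ := h.choose_spec
    exact Or.inl ⟨h.choose, hp, hx, rfl⟩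
  · exact Or.inr rfl

lemma κE_sub (x : ↥S × ℕ) :
    (x.1 : Set ℕ) ⊆ ((κE hST hSclosed hdom d e x).1 : Set ℕ) := by
  rcases κE_spec hST hSclosed hdom d e x with ⟨p, _, hx, hk⟩ | hk
  · rw [hk]
    have h1 : (x.1 : Set ℕ) = BB hdom e p :=
      congrArg (fun z : ↥S × ℕ => (z.1 : Set ℕ)) hx
    rw [h1]
    exact BB_sub hdom e p
  · rw [hk]

lemma κE_one (x : ↥S × ℕ) (h1 : (1:ℕ) ∈ ((κE hST hSclosed hdom d e x).1 : Set ℕ)) :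
    (1:ℕ) ∈ (x.1 : Set ℕ) := by
  rcases κE_spec hST hSclosed hdom d e x with ⟨p, _, hx, hk⟩ | hk
  · rw [hk] at h1
    have h2 : (x.1 : Set ℕ) = BB hdom e p :=
      congrArg (fun z : ↥S × ℕ => (z.1 : Set ℕ)) hx
    rw [h2]
    exact BB_one hdom e _ h1
  · rw [hk] at h1
    exact h1

lemma κE_inj : Function.Injective (κE hST hSclosed hdom d e) := by
  intro x y hxy
  rcases κE_spec hST hSclosed hdom d e x with ⟨p, ⟨hp1, hp2⟩, hx, hkx⟩ | hkx <;>
    rcases κE_spec hST hSclosed hdom d e y with ⟨q, ⟨hq1, hq2⟩, hy, hky⟩ | hky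
  · rw [hkx, hky] at hxy
    rw [hx, hy, hxy]
    
  · rw [hkx, hky] at hxy
    exact absurd (by rw [hxy]; exact y.1.2) hp1
  · rw [hkx, hky] at hxy
    exact absurd (by rw [← hxy]; exact x.1.2) hq1
  · rw [hkx, hky] at hxy
    have h1 : (x.1 : Set ℕ) = (y.1 : Set ℕ) := congrArg (fun z : ↥T × ℕ => (z.1 : Set ℕ)) hxy
    have h2 := congrArg Prod.snd hxy
    exact Prod.ext (Subtype.ext h1) h2

/-- The extension nice map. -/
noncomputable def gE : NiceMap S T where
  κ := κE hST hSclosed hdom d e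
  inj := κE_inj hST hSclosed hdom d e
  sub := κE_sub hST hSclosed hdom d e
  one := κE_one hST hSclosed hdom d e

lemma gE_d : (gE hST hSclosed hdom d e).toFun ∘ d = (inclNice hST).toFun ∘ d := by
  funext i
  simp only [Function.comp_apply]
  apply flower_eq'
  · show κE hST hSclosed hdom d e (d i).1 = (inclNice hST).κ (d i).1
    exact κE_low hST hSclosed hdom d e (d i).1 (NN_d d e i)
  · rw [NiceMap.toFun_snd_val, NiceMap.toFun_snd_val]

/-- The pulled-back tuple. -/
noncomputable def fE : Fin k → FlowerV S := fun i =>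
  if h : ((e i).1.1 : Set ℕ) ∈ S then
    ⟨(⟨((e i).1.1 : Set ℕ), h⟩, (e i).1.2), (e i).2⟩
  else
    ⟨sP hSclosed hdom d e (e i).1,
      (e i).2.attach.map (fun x => ⟨(x.1 : ℕ × ℕ),
        ⟨Or.inr (Or.inl ⟨i, rfl, x.1, Option.mem_def.1 x.2, rfl⟩),
          x.1.2.2.1, x.1.2.2.2⟩⟩)⟩

lemma opt_map_val {α β γ : Type*} (o : Option α) (f : {x // x ∈ o} → β) (g : α → γ)
    (v : β → γ) (h : ∀ x, v (f x) = g x.val) :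
    Option.map v (o.attach.map f) = Option.map g o := by
  cases o <;> simp [h]

lemma gE_f : (gE hST hSclosed hdom d e).toFun ∘ (fE hSclosed hdom d e) = e := by
  funext i
  simp only [Function.comp_apply]
  apply flower_eq'
  · show κE hST hSclosed hdom d e (fE hSclosed hdom d e i).1 = (e i).1
    by_cases h : ((e i).1.1 : Set ℕ) ∈ S
    · have hf : fE hSclosed hdom d e i = _ := dif_pos h
      rw [hf]
      show κE hST hSclosed hdom d e (⟨((e i).1.1 : Set ℕ), h⟩, (e i).1.2) = (e i).1
      rw [κE_low hST hSclosed hdom d e _ (by simpa using NN_e d e i)]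
    · have hf : fE hSclosed hdom d e i = _ := dif_neg h
      rw [hf]
      exact κE_s hST hSclosed hdom d e (e i).1 h ⟨i, rfl⟩
  · rw [NiceMap.toFun_snd_val]
    show Option.map Subtype.val (fE hSclosed hdom d e i).2 = Option.map Subtype.val (e i).2
    by_cases h : ((e i).1.1 : Set ℕ) ∈ S
    · have hf : fE hSclosed hdom d e i = _ := dif_pos h
      rw [hf]
    · have hf : fE hSclosed hdom d e i = _ := dif_neg h
      rw [hf]
      exact opt_map_val _ _ _ _ (fun x => rfl)

end extension


section main

variable {S T : Set (Set ℕ)}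

lemma bf0_ST (g : NiceMap S T) {n : ℕ} (a : Fin n → FlowerV S) :
    bfLeq binLang 0 (FlowerV S) (FlowerV T) a (g.toFun ∘ a) := by
  rw [bfLeq_zero_iff]
  exact bfLeq_zero_of_emb g a _ rfl

lemma bf0_TS (g : NiceMap S T) {n : ℕ} (a : Fin n → FlowerV S) :
    bfLeq binLang 0 (FlowerV T) (FlowerV S) (g.toFun ∘ a) a := by
  rw [bfLeq_zero_iff]
  intro k hk
  exact (bfLeq_zero_of_emb g a _ rfl k hk).symm

lemma bf1_TS (g : NiceMap S T) {n : ℕ} (a : Fin n → FlowerV S) :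
    bfLeq binLang 1 (FlowerV T) (FlowerV S) (g.toFun ∘ a) a := by
  rw [bfLeq_pos_iff (by norm_num : (1 : Ordinal.{0}) ≠ 0)]
  intro β hβ j gbar
  obtain rfl := lt_one hβ
  refine ⟨g.toFun ∘ gbar, ?_⟩
  rw [← comp_append]
  exact bf0_ST g _

end main

/-- For nonempty families `𝒮 ⊆ 𝒯` of subsets of `ω` closed under finite
additions of elements, if every `T ∈ 𝒯` contains some `S ∈ 𝒮` then `G_𝒮 ≥₃ G_𝒯`. -/
theorem statement10 (S T : Set (Set ℕ)) (hS : S.Nonempty) (hT : T.Nonempty)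
    (hSclosed : ∀ A ∈ S, ∀ F : Set ℕ, F.Finite → A ∪ F ∈ S)
    (hTclosed : ∀ A ∈ T, ∀ F : Set ℕ, F.Finite → A ∪ F ∈ T)
    (hST : S ⊆ T) (hdom : ∀ A ∈ T, ∃ B ∈ S, B ⊆ A) :
    structLeq binLang 3 (FlowerV T) (FlowerV S) := by
  unfold structLeq
  rw [bfLeq_pos_iff (by norm_num : (3 : Ordinal.{0}) ≠ 0)]
  intro β hβ m dbar
  refine ⟨(inclNice hST).toFun ∘ dbar, ?_⟩
  have hc : Fin.append Fin.elim0 ((inclNice hST).toFun ∘ dbar)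
      = (inclNice hST).toFun ∘ Fin.append Fin.elim0 dbar := by
    have h0 : (inclNice hST).toFun ∘ (Fin.elim0 : Fin 0 → FlowerV S) = Fin.elim0 :=
      Subsingleton.elim _ _
    rw [comp_append, h0]
  rw [hc]
  set a := Fin.append Fin.elim0 dbar with ha
  rcases lt_three hβ with rfl | rfl | rfl
  · exact bf0_ST (inclNice hST) a
  · rw [bfLeq_pos_iff (by norm_num : (1 : Ordinal.{0}) ≠ 0)]
    intro γ hγ k ebar
    obtain rfl := lt_one hγ
    refine ⟨fE hSclosed hdom a ebar, ?_⟩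
    have h1 : Fin.append ((inclNice hST).toFun ∘ a) ebar
        = (gE hST hSclosed hdom a ebar).toFun ∘ Fin.append a (fE hSclosed hdom a ebar) := by
      conv_rhs => rw [comp_append]
      rw [gE_d, gE_f]
    rw [h1]
    exact bf0_TS _ _
  · rw [bfLeq_pos_iff (by norm_num : (2 : Ordinal.{0}) ≠ 0)]
    intro γ hγ k ebar
    refine ⟨fE hSclosed hdom a ebar, ?_⟩
    have h1 : Fin.append ((inclNice hST).toFun ∘ a) ebar
        = (gE hST hSclosed hdom a ebar).toFun ∘ Fin.append a (fE hSclosed hdom a ebar) := by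
      conv_rhs => rw [comp_append]
      rw [gE_d, gE_f]
    rw [h1]
    rcases lt_two hγ with rfl | rfl
    · exact bf0_TS _ _
    · exact bf1_TS _ _


end BFPaper
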